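/- Let (A,·) be the semigroup K-algebra of the rectangular band I×J. For every (i,j) ∈ I×J, the centralizer of e_{ij} in A (the set of a ∈ A with a·e_{ij} = e_{ij}·a) equals the direct sum of the one-dimensional subspace K·e_{ij} and the annihilator Ann(A); in particular K·e_{ij} ∩ Ann(A) = {0} and every a commuting with e_{ij} can be written uniquely as λe_{ij} + r with λ ∈ K and r ∈ Ann(A). -/

import Mathlib

/-- Right multiplication by `e (k,l)` does not depend on `k`. -/
lemma aux_mulRight_indep {K A I J : Type*} [Field K]
    [NonUnitalRing A] [Module K A] [SMulCommClass K A A] [IsScalarTower K A A]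
    (e : Module.Basis (I × J) K A)
    (hmul : ∀ (i k : I) (j l : J), e (i, j) * e (k, l) = e (i, l))
    (a : A) (k k' : I) (l : J) :
    a * e (k, l) = a * e (k', l) := by
  have h : LinearMap.mulRight K (e (k, l)) = LinearMap.mulRight K (e (k', l)) :=
    e.ext fun ⟨p, q⟩ => by simp [LinearMap.mulRight_apply, hmul]
  simpa [LinearMap.mulRight_apply] using LinearMap.congr_fun h a

/-- Left multiplication by `e (k,l)` does not depend on `l`. -/
lemma aux_mulLeft_indep {K A I J : Type*} [Field K]
    [NonUnitalRing A] [Module K A] [SMulCommClass K A A] [IsScalarTower K A A]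
    (e : Module.Basis (I × J) K A)
    (hmul : ∀ (i k : I) (j l : J), e (i, j) * e (k, l) = e (i, l))
    (a : A) (k : I) (l l' : J) :
    e (k, l) * a = e (k, l') * a := by
  have h : LinearMap.mulLeft K (e (k, l)) = LinearMap.mulLeft K (e (k, l')) :=
    e.ext fun ⟨p, q⟩ => by simp [LinearMap.mulLeft_apply, hmul]
  simpa [LinearMap.mulLeft_apply] using LinearMap.congr_fun h a

lemma aux_annihilates_of_basis {K A I J : Type*} [Field K]
    [NonUnitalRing A] [Module K A] [SMulCommClass K A A] [IsScalarTower K A A]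
    (e : Module.Basis (I × J) K A) (x : A)
    (h : ∀ p : I × J, x * e p = 0 ∧ e p * x = 0) (b : A) :
    x * b = 0 ∧ b * x = 0 := by
  have h1 : (⊤ : Submodule K A) ≤ LinearMap.ker (LinearMap.mulLeft K x) := by
    rw [← e.span_eq, Submodule.span_le]
    rintro _ ⟨p, rfl⟩
    simp [LinearMap.mem_ker, (h p).1]
  have h2 : (⊤ : Submodule K A) ≤ LinearMap.ker (LinearMap.mulRight K x) := by
    rw [← e.span_eq, Submodule.span_le]
    rintro _ ⟨p, rfl⟩
    simp [LinearMap.mem_ker, (h p).2]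
  constructor
  · simpa using h1 (Submodule.mem_top (x := b))
  · simpa using h2 (Submodule.mem_top (x := b))

/-- `E * (x * E)` always lies in the span of `E`. -/
lemma aux_sandwich_mem_span {K A I J : Type*} [Field K]
    [NonUnitalRing A] [Module K A] [SMulCommClass K A A] [IsScalarTower K A A]
    (e : Module.Basis (I × J) K A)
    (hmul : ∀ (i k : I) (j l : J), e (i, j) * e (k, l) = e (i, l))
    (i : I) (j : J) (x : A) :
    e (i, j) * (x * e (i, j)) ∈ Submodule.span K {e (i, j)} := by
  have hle : (⊤ : Submodule K A) ≤ Submodule.comap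
      (LinearMap.mulLeft K (e (i, j)) ∘ₗ LinearMap.mulRight K (e (i, j)))
      (Submodule.span K {e (i, j)}) := by
    rw [← e.span_eq, Submodule.span_le]
    rintro _ ⟨⟨k, l⟩, rfl⟩
    simp only [SetLike.mem_coe, Submodule.mem_comap, LinearMap.coe_comp,
      Function.comp_apply, LinearMap.mulLeft_apply, LinearMap.mulRight_apply]
    rw [hmul, hmul]
    exact Submodule.mem_span_singleton_self _
  have h := hle (Submodule.mem_top (x := x))
  simpa [Submodule.mem_comap] using h

/-- For the semigroup algebra `(A, ·)` of the rectangular band `I × J` over a field `K`,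
the centralizer of `e_{ij}` in `A` is the direct sum of `K·e_{ij}` and the annihilator
`Ann(A)`: the intersection of `K·e_{ij}` and `Ann(A)` is trivial, and an element `a`
commutes with `e_{ij}` if and only if it can be written (uniquely) as `λ • e_{ij} + r`
with `λ ∈ K` and `r ∈ Ann(A)`. -/
theorem centralizer_eq_span_oplus_annihilator {K A I J : Type*} [Field K]
    [NonUnitalRing A] [Module K A] [SMulCommClass K A A] [IsScalarTower K A A]
    [Nonempty I] [Nonempty J]
    (e : Module.Basis (I × J) K A)
    (hmul : ∀ (i k : I) (j l : J), e (i, j) * e (k, l) = e (i, l))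
    (i : I) (j : J) :
    (∀ (c : K) (r : A), (∀ b : A, r * b = 0 ∧ b * r = 0) → c • e (i, j) = r →
      c = 0 ∧ r = 0) ∧
    (∀ a : A, a * e (i, j) = e (i, j) * a ↔
      ∃! p : K × A, (∀ b : A, p.2 * b = 0 ∧ b * p.2 = 0) ∧
        a = p.1 • e (i, j) + p.2) := by
  have hEE : e (i, j) * e (i, j) = e (i, j) := hmul i i j j
  have hEne : e (i, j) ≠ 0 := e.ne_zero _
  have part1 : ∀ (c : K) (r : A), (∀ b : A, r * b = 0 ∧ b * r = 0) →
      c • e (i, j) = r → c = 0 ∧ r = 0 := by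
    intro c r hr hcr
    have h1 : r * e (i, j) = 0 := (hr _).1
    have h2 : r * e (i, j) = r := by
      rw [← hcr, smul_mul_assoc, hEE]
    have hr0 : r = 0 := by rw [← h2, h1]
    refine ⟨?_, hr0⟩
    have h3 : c • e (i, j) = 0 := by rw [hcr, hr0]
    rcases smul_eq_zero.mp h3 with hc | hE0
    · exact hc
    · exact absurd hE0 hEne
  refine ⟨part1, fun a => ⟨fun hcomm => ?_, fun hex => ?_⟩⟩
  · -- forward direction
    have hmE : (a * e (i, j)) * e (i, j) = a * e (i, j) := by
      rw [mul_assoc, hEE]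
    have hEm : e (i, j) * (a * e (i, j)) = a * e (i, j) := by
      rw [hcomm, ← mul_assoc, hEE, ← hcomm]
    have hm_span : a * e (i, j) ∈ Submodule.span K {e (i, j)} := by
      have h := aux_sandwich_mem_span e hmul i j (a * e (i, j))
      rwa [hmE, hEm] at h
    obtain ⟨lam, hlam⟩ := Submodule.mem_span_singleton.mp hm_span
    have hrbasis : ∀ p : I × J,
        (a - lam • e (i, j)) * e p = 0 ∧ e p * (a - lam • e (i, j)) = 0 := by
      rintro ⟨k, l⟩
      constructor
      · have h2 : e (i, j) * e (i, l) = e (i, l) := hmul i i j l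
        have h4 : e (i, j) * e (k, l) = e (i, l) := hmul i k j l
        have h3 : a * e (i, l) = lam • e (i, l) := by
          calc a * e (i, l) = a * (e (i, j) * e (i, l)) := by rw [h2]
            _ = (a * e (i, j)) * e (i, l) := (mul_assoc _ _ _).symm
            _ = (lam • e (i, j)) * e (i, l) := by rw [hlam]
            _ = lam • (e (i, j) * e (i, l)) := smul_mul_assoc _ _ _
            _ = lam • e (i, l) := by rw [h2]
        rw [sub_mul, smul_mul_assoc, h4,
          aux_mulRight_indep e hmul a k i l, h3, sub_self]
      · have h2 : e (k, j) * e (i, j) = e (k, j) := hmul k i j j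
        have h4 : e (k, l) * e (i, j) = e (k, j) := hmul k i l j
        have h3 : e (k, j) * a = lam • e (k, j) := by
          calc e (k, j) * a = (e (k, j) * e (i, j)) * a := by rw [h2]
            _ = e (k, j) * (e (i, j) * a) := mul_assoc _ _ _
            _ = e (k, j) * (a * e (i, j)) := by rw [hcomm]
            _ = e (k, j) * (lam • e (i, j)) := by rw [← hlam]
            _ = lam • (e (k, j) * e (i, j)) := mul_smul_comm _ _ _
            _ = lam • e (k, j) := by rw [h2]
        rw [mul_sub, mul_smul_comm, h4,
          aux_mulLeft_indep e hmul a k l j, h3, sub_self]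
    have hrann : ∀ b : A,
        (a - lam • e (i, j)) * b = 0 ∧ b * (a - lam • e (i, j)) = 0 :=
      aux_annihilates_of_basis e _ hrbasis
    refine ⟨(lam, a - lam • e (i, j)), ⟨hrann, by rw [add_sub_cancel]⟩, ?_⟩
    rintro ⟨c, s⟩ ⟨hsann, hseq⟩
    have heq : (c - lam) • e (i, j) = (a - lam • e (i, j)) - s := by
      rw [sub_smul]
      conv_rhs => rw [hseq]
      abel
    have hsub : ∀ b : A, ((a - lam • e (i, j)) - s) * b = 0 ∧
        b * ((a - lam • e (i, j)) - s) = 0 := by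
      intro b
      constructor
      · rw [sub_mul, (hrann b).1, (hsann b).1, sub_self]
      · rw [mul_sub, (hrann b).2, (hsann b).2, sub_self]
    obtain ⟨hc0, hrs0⟩ := part1 _ _ hsub heq
    have hc : c = lam := sub_eq_zero.mp hc0
    have hs : s = a - lam • e (i, j) := (sub_eq_zero.mp hrs0).symm
    exact Prod.ext hc hs
  · -- converse direction
    obtain ⟨⟨c, s⟩, ⟨hsann, hseq⟩, -⟩ := hex
    rw [hseq]
    simp only [add_mul, mul_add, smul_mul_assoc, mul_smul_comm, hEE,
      (hsann (e (i, j))).1, (hsann (e (i, j))).2]
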